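/- Let c_m, c_s > 0 be reals and let r* be the unique x ∈ [0,Q] satisfying c_m·x/Q = c_s·ĝ(x) (such an x exists, is unique, and is the unique minimizer of max{c_m·x/Q, c_s·ĝ(x)} over [0,Q]). Assume 0 < r* ≤ Q−1. Then every (K,N,Q,T)-scheme with singleton Reduce assignment satisfying max{c_m·p, c_s·L} = c_m·r*/Q (i.e., attaining the minimum of max{c_m·x/Q, c_s·ĝ(x)} with equality) has K ≥ Q + ⌈Q/r*⌉. -/

import Mathlib

/-- A (K,N,Q,T)-scheme: K servers, N input files, Q output functions,
T-bit intermediate values.  `M k` is the set of files mapped by server `k`,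
`W k` the set of functions reduced by server `k`, `len k` the length (in bits)
of server `k`'s message; `enc` produces the message of each server from its
locally computed intermediate values, and `dec` recovers, for each server `k`
and each `q ∈ W k`, the full row of intermediate values of function `q`
from all messages and the local values, correctly for every realization `v`. -/
structure Scheme (K N Q T : ℕ) where
  M : Fin K → Finset (Fin N)
  W : Fin K → Finset (Fin Q)
  cover : ∀ n : Fin N, ∃ k : Fin K, n ∈ M k
  len : Fin K → ℕ
  enc : (k : Fin K) → (Fin Q → {n : Fin N // n ∈ M k} → (Fin T → Bool)) →
    (Fin (len k) → Bool)
  dec : (k : Fin K) → (q : Fin Q) → q ∈ W k →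
    ((j : Fin K) → (Fin (len j) → Bool)) →
    (Fin Q → {n : Fin N // n ∈ M k} → (Fin T → Bool)) →
    (Fin N → Fin T → Bool)
  correct : ∀ (v : Fin Q × Fin N → Fin T → Bool) (k : Fin K) (q : Fin Q) (hq : q ∈ W k),
    dec k q hq (fun j => enc j (fun q' n => v (q', n.1))) (fun q' n => v (q', n.1)) =
      fun n => v (q, n)

/-- Peak computation load `p = (max_k |M k|)/N`. -/
noncomputable def peakLoad {K N Q T : ℕ} (S : Scheme K N Q T) : ℝ :=
  ((Finset.univ.sup (fun k : Fin K => (S.M k).card) : ℕ) : ℝ) / N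

/-- Communication load `L = (∑_k ℓ k)/(Q·N·T)`. -/
noncomputable def commLoad {K N Q T : ℕ} (S : Scheme K N Q T) : ℝ :=
  (∑ k : Fin K, (S.len k : ℝ)) / ((Q : ℝ) * N * T)

/-- Singleton Reduce assignment: the `W k` are pairwise disjoint, cover `Fin Q`,
and each server reduces at most one function. -/
def SingletonReduce {K N Q T : ℕ} (S : Scheme K N Q T) : Prop :=
  (∀ j k : Fin K, j ≠ k → Disjoint (S.W j) (S.W k)) ∧
  (∀ q : Fin Q, ∃ k : Fin K, q ∈ S.W k) ∧
  (∀ k : Fin K, (S.W k).card ≤ 1)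

/-- `ĝ`: the piecewise-linear interpolation at the integers of
`g(x) = (Q−x)/(Q·(x+1))`; on `[0,Q]` this is the lower convex envelope of the
points `{(r, g(r)) : r ∈ {0,…,Q}}` (note the formula also gives `ĝ(Q) = 0`). -/
noncomputable def gHat (Q : ℕ) (x : ℝ) : ℝ :=
  ((⌊x⌋ : ℝ) + 1 - x) * (((Q : ℝ) - (⌊x⌋ : ℝ)) / ((Q : ℝ) * ((⌊x⌋ : ℝ) + 1))) +
  (x - (⌊x⌋ : ℝ)) * (((Q : ℝ) - ((⌊x⌋ : ℝ) + 1)) / ((Q : ℝ) * ((⌊x⌋ : ℝ) + 2)))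


open Finset


lemma perm_partition {Q : ℕ} (B : Finset (Fin Q)) (u : Fin Q) (hu : u ∉ B) :
    (B.card + 1) * (univ.filter (fun σ : Equiv.Perm (Fin Q) =>
      ∀ b ∈ B, σ.symm u < σ.symm b)).card = Fintype.card (Equiv.Perm (Fin Q)) := by
  classical
  set A : Finset (Fin Q) := insert u B with hA
  have hAne : A.Nonempty := insert_nonempty _ _
  have huA : u ∈ A := mem_insert_self _ _
  have hAcard : A.card = B.card + 1 := card_insert_of_notMem hu
  set F : Equiv.Perm (Fin Q) → Fin Q :=
    fun σ => σ ((A.image σ.symm).min' (hAne.image _)) with hFdef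
  have hFmem : ∀ σ, F σ ∈ A := by
    intro σ
    obtain ⟨a, ha, hax⟩ := mem_image.mp (min'_mem (A.image σ.symm) (hAne.image _))
    have : F σ = a := by simp [hFdef, ← hax]
    rwa [this]
  have hsymmF : ∀ σ : Equiv.Perm (Fin Q), σ.symm (F σ) = (A.image σ.symm).min' (hAne.image σ.symm) := by
    intro σ; simp [hFdef]
  have hFiff : ∀ (σ : Equiv.Perm (Fin Q)) (a : Fin Q), a ∈ A →
      (F σ = a ↔ ∀ x ∈ A, x ≠ a → σ.symm a < σ.symm x) := by
    intro σ a ha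
    constructor
    · intro hFa x hx hxa
      have h1 : σ.symm a ≤ σ.symm x := by
        rw [← hFa, hsymmF]
        exact min'_le _ _ (mem_image_of_mem _ hx)
      exact lt_of_le_of_ne h1 (fun hcon => hxa (σ.symm.injective hcon).symm)
    · intro hstrict
      by_contra hne
      have h1 : σ.symm (F σ) ≤ σ.symm a := by
        rw [hsymmF]; exact min'_le _ _ (mem_image_of_mem _ ha)
      have h2 : σ.symm a < σ.symm (F σ) := hstrict (F σ) (hFmem σ) hne
      exact absurd (lt_of_lt_of_le h2 h1) (lt_irrefl _)
  have hpart : Fintype.card (Equiv.Perm (Fin Q)) =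
      ∑ a ∈ A, (univ.filter (fun σ => F σ = a)).card := by
    rw [← card_univ]
    exact card_eq_sum_card_fiberwise (fun σ _ => hFmem σ)
  -- each fiber has the same card as fiber u
  have hfibu : (univ.filter (fun σ => F σ = u)) =
      (univ.filter (fun σ : Equiv.Perm (Fin Q) => ∀ b ∈ B, σ.symm u < σ.symm b)) := by
    ext σ
    simp only [mem_filter, mem_univ, true_and]
    rw [hFiff σ u huA]
    constructor
    · intro h b hb
      exact h b (mem_insert_of_mem hb) (fun hbu => hu (hbu ▸ hb))
    · intro h x hx hxu
      rcases mem_insert.mp hx with h1 | h1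
      · exact absurd h1 hxu
      · exact h x h1
  have hfib : ∀ a ∈ A, (univ.filter (fun σ => F σ = a)).card =
      (univ.filter (fun σ => F σ = u)).card := by
    intro a ha
    by_cases hau : a = u
    · rw [hau]
    · refine card_bij' (fun σ _ => σ.trans (Equiv.swap a u))
        (fun σ _ => σ.trans (Equiv.swap a u)) ?_ ?_
        (fun σ _ => by ext x; simp)
        (fun σ _ => by ext x; simp)
      · intro σ hσ
        simp only [mem_filter, mem_univ, true_and] at hσ ⊢
        rw [hFiff _ u huA]
        intro x hx hxu
        have hsymm : ∀ y, (σ.trans (Equiv.swap a u)).symm y = σ.symm (Equiv.swap a u y) := by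
          intro y; rfl
        rw [hFiff _ a ha] at hσ
        rw [hsymm, hsymm, Equiv.swap_apply_right]
        by_cases hxa : x = a
        · rw [hxa, Equiv.swap_apply_left]
          exact hσ u huA (fun h => hau h.symm)
        · rw [Equiv.swap_apply_of_ne_of_ne hxa hxu]
          exact hσ x hx hxa
      · intro σ hσ
        simp only [mem_filter, mem_univ, true_and] at hσ ⊢
        rw [hFiff _ a ha]
        intro x hx hxa
        have hsymm : ∀ y, (σ.trans (Equiv.swap a u)).symm y = σ.symm (Equiv.swap a u y) := by
          intro y; rfl
        rw [hFiff _ u huA] at hσ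
        rw [hsymm, hsymm, Equiv.swap_apply_left]
        by_cases hxu : x = u
        · rw [hxu, Equiv.swap_apply_right]
          exact hσ a ha hau
        · rw [Equiv.swap_apply_of_ne_of_ne hxa hxu]
          exact hσ x hx hxu
  rw [hpart, Finset.sum_congr rfl hfib, Finset.sum_const, hfibu]
  rw [hAcard, smul_eq_mul]

lemma perm_cnt_sum {Q : ℕ} (B : Finset (Fin Q)) :
    (B.card + 1) * ∑ σ : Equiv.Perm (Fin Q),
      (univ.filter (fun q : Fin Q => ∀ j : Fin Q, j ≤ σ.symm q → σ j ∉ B)).card =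
    (Q - B.card) * Fintype.card (Equiv.Perm (Fin Q)) := by
  classical
  -- rewrite each filter as a "strictly-before-all-of-B" filter
  have hfilter : ∀ σ : Equiv.Perm (Fin Q),
      (univ.filter (fun q : Fin Q => ∀ j : Fin Q, j ≤ σ.symm q → σ j ∉ B)) =
      (univ.filter (fun u : Fin Q => u ∉ B ∧ ∀ b ∈ B, σ.symm u < σ.symm b)) := by
    intro σ
    ext q
    simp only [mem_filter, mem_univ, true_and]
    constructor
    · intro h
      refine ⟨by simpa using h (σ.symm q) le_rfl, ?_⟩
      intro b hb
      by_contra hle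
      push_neg at hle
      exact (h (σ.symm b) hle) (by simpa using hb)
    · rintro ⟨hq, hlt⟩ j hj hjB
      have := hlt (σ j) hjB
      rw [Equiv.symm_apply_apply] at this
      exact absurd (lt_of_le_of_lt hj this) (lt_irrefl _)
  have hswap : ∑ σ : Equiv.Perm (Fin Q),
      (univ.filter (fun u : Fin Q => u ∉ B ∧ ∀ b ∈ B, σ.symm u < σ.symm b)).card =
      ∑ u : Fin Q, (if u ∈ B then 0 else
        (univ.filter (fun σ : Equiv.Perm (Fin Q) => ∀ b ∈ B, σ.symm u < σ.symm b)).card) := by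
    have h1 : ∀ σ : Equiv.Perm (Fin Q),
        (univ.filter (fun u : Fin Q => u ∉ B ∧ ∀ b ∈ B, σ.symm u < σ.symm b)).card =
        ∑ u : Fin Q, (if u ∉ B ∧ ∀ b ∈ B, σ.symm u < σ.symm b then 1 else 0) := by
      intro σ; rw [Finset.card_filter]
    rw [Finset.sum_congr rfl (fun σ _ => h1 σ), Finset.sum_comm]
    refine Finset.sum_congr rfl (fun u _ => ?_)
    by_cases hu : u ∈ B
    · simp [hu]
    · rw [if_neg hu, Finset.card_filter]
      refine Finset.sum_congr rfl (fun σ _ => ?_)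
      simp [hu]
  rw [Finset.sum_congr rfl (fun σ _ => congrArg Finset.card (hfilter σ)), hswap,
    Finset.mul_sum]
  have : ∀ u : Fin Q, (B.card + 1) * (if u ∈ B then 0 else
      (univ.filter (fun σ : Equiv.Perm (Fin Q) => ∀ b ∈ B, σ.symm u < σ.symm b)).card) =
      (if u ∈ B then 0 else Fintype.card (Equiv.Perm (Fin Q))) := by
    intro u
    by_cases hu : u ∈ B
    · simp [hu]
    · rw [if_neg hu, if_neg hu, perm_partition B u hu]
  rw [Finset.sum_congr rfl (fun u _ => this u), Finset.sum_ite, Finset.sum_const,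
    Finset.sum_const]
  have h1 : (univ.filter (fun u : Fin Q => ¬ u ∈ B)).card = Q - B.card := by
    rw [Finset.filter_not, Finset.card_sdiff_of_subset (by simp [Finset.filter_subset])]
    simp [Finset.filter_mem_eq_inter]
  simp [h1]


lemma sum_first {Q : ℕ} (hQ1 : 0 < Q) (f : Fin Q → ℕ) :
    ∑ σ : Equiv.Perm (Fin Q), f (σ ⟨0, hQ1⟩) = (Q-1).factorial * ∑ q : Fin Q, f q := by
  obtain ⟨m, rfl⟩ : ∃ m, Q = m + 1 := ⟨Q-1, by omega⟩
  rw [← Equiv.sum_comp (Equiv.Perm.decomposeFin.symm)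
    (fun σ : Equiv.Perm (Fin (m+1)) => f (σ ⟨0, hQ1⟩))]
  rw [Fintype.sum_prod_type]
  have h1 : ∀ p : Fin (m+1), ∀ τ : Equiv.Perm (Fin m),
      f ((Equiv.Perm.decomposeFin.symm (p, τ)) ⟨0, hQ1⟩) = f p := by
    intro p τ
    have h0 : (⟨0, hQ1⟩ : Fin (m+1)) = 0 := rfl
    rw [h0, Equiv.Perm.decomposeFin_symm_apply_zero]
  simp only [h1]
  rw [Finset.sum_congr rfl (fun p _ => Finset.sum_const _)]
  simp [Finset.mul_sum, Fintype.card_perm, mul_comm]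

noncomputable def gg (Q t : ℕ) : ℝ := ((Q:ℝ) - (t:ℝ))/((Q:ℝ)*((t:ℝ)+1))

lemma line_exists (Q : ℕ) (hQ2 : 2 ≤ Q) (r : ℝ) (h0 : 0 < r) (h1 : r ≤ (Q:ℝ) - 1) :
    ∃ m : ℕ, (m:ℝ) ≤ r ∧ r ≤ (m:ℝ)+1 ∧ m + 2 ≤ Q ∧
      gHat Q r = gg Q m + (gg Q (m+1) - gg Q m) * (r - (m:ℝ)) := by
  have hfl0 : 0 ≤ ⌊r⌋ := Int.floor_nonneg.mpr h0.le
  set f : ℕ := ⌊r⌋.toNat with hf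
  have hfr : ((f:ℕ):ℝ) = (⌊r⌋:ℝ) := by
    rw [hf]; exact_mod_cast congrArg Int.cast (Int.toNat_of_nonneg hfl0)
  have hfle : (f:ℝ) ≤ r := by rw [hfr]; exact Int.floor_le r
  have hrlt : r < (f:ℝ) + 1 := by rw [hfr]; exact Int.lt_floor_add_one r
  by_cases hcase : f + 2 ≤ Q
  · refine ⟨f, hfle, hrlt.le, hcase, ?_⟩
    unfold gHat gg
    rw [← hfr]
    push_cast
    ring
  · -- then f = Q - 1 and r = Q - 1
    have hfle' : (f:ℝ) ≤ (Q:ℝ) - 1 := le_trans hfle h1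
    have hfQ : f = Q - 1 := by
      have h2 : (f:ℝ) ≤ ((Q - 1 : ℕ) : ℝ) := by
        rwa [Nat.cast_sub (by omega), Nat.cast_one]
      have h3 : f ≤ Q - 1 := by exact_mod_cast h2
      omega
    have hrQ : r = (Q:ℝ) - 1 := by
      have : ((Q:ℝ) - 1) ≤ r := by
        have := hfle
        rw [hfQ, Nat.cast_sub (by omega), Nat.cast_one] at this
        exact this
      linarith
    refine ⟨Q - 2, ?_, ?_, by omega, ?_⟩
    · rw [Nat.cast_sub (by omega), hrQ]; push_cast; linarith
    · rw [Nat.cast_sub (by omega), hrQ]; push_cast; linarith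
    · have hflr : (⌊r⌋:ℝ) = (Q:ℝ) - 1 := by
        rw [← hfr, hfQ, Nat.cast_sub (by omega), Nat.cast_one]
      unfold gHat gg
      rw [hflr, hrQ]
      rw [Nat.cast_sub (by omega)]
      push_cast
      have hQ0 : (Q:ℝ) ≠ 0 := by positivity
      have hQR : (2:ℝ) ≤ (Q:ℝ) := by exact_mod_cast hQ2
      have hQ1 : (Q:ℝ) - 2 + 1 ≠ 0 := by intro h; linarith
      have hQ1' : (Q:ℝ) - 1 ≠ 0 := by intro h; linarith
      field_simp
      ring_nf
      have e1 : (Q:ℝ)^3 * ((Q:ℝ)⁻¹)^2 = (Q:ℝ) := by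
        field_simp
      have e2 : (Q:ℝ)^4 * ((Q:ℝ)⁻¹)^2 = (Q:ℝ)^2 := by
        field_simp
      rw [Nat.cast_sub hQ2]; push_cast; linear_combination ((Q:ℝ) - 1) * inv_mul_cancel₀ hQ0

lemma gg_line_id (Q m t : ℕ) (hQ2 : 2 ≤ Q) :
    gg Q t - (gg Q m + (gg Q (m+1) - gg Q m) * ((t:ℝ) - (m:ℝ))) =
      (((Q:ℝ)+1) / ((Q:ℝ)*((m:ℝ)+1)*((m:ℝ)+2))) *
        (((t:ℝ)-(m:ℝ)) * ((t:ℝ)-(m:ℝ)-1) / ((t:ℝ)+1)) := by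
  have hQ0 : (Q:ℝ) ≠ 0 := by positivity
  have ht1 : ((t:ℝ)+1) ≠ 0 := by positivity
  have hm1 : ((m:ℝ)+1) ≠ 0 := by positivity
  have hm2 : ((m:ℝ)+2) ≠ 0 := by positivity
  unfold gg
  push_cast
  field_simp
  ring

lemma gg_ge_line (Q m t : ℕ) (hQ2 : 2 ≤ Q) : 
    gg Q m + (gg Q (m+1) - gg Q m) * ((t:ℝ) - (m:ℝ)) ≤ gg Q t := by
  have hid := gg_line_id Q m t hQ2
  have hfac : 0 ≤ ((t:ℝ)-(m:ℝ)) * ((t:ℝ)-(m:ℝ)-1) := by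
    rcases le_or_gt t m with h | h
    · have h' : (t:ℝ) ≤ (m:ℝ) := by exact_mod_cast h
      nlinarith
    · have h' : (m:ℝ)+1 ≤ (t:ℝ) := by exact_mod_cast h
      nlinarith
  have hQ0 : (0:ℝ) < (Q:ℝ) := by exact_mod_cast (by omega : 0 < Q)
  have hc : 0 ≤ (((Q:ℝ)+1) / ((Q:ℝ)*((m:ℝ)+1)*((m:ℝ)+2))) := by
    apply div_nonneg (by linarith)
    have : (0:ℝ) < ((m:ℝ)+1) := by positivity
    have : (0:ℝ) < ((m:ℝ)+2) := by positivity
    positivity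
  have ht1 : (0:ℝ) ≤ ((t:ℝ)+1) := by positivity
  have := mul_nonneg hc (div_nonneg hfac ht1)
  linarith

lemma gg_at_Q (Q : ℕ) : gg Q Q = 0 := by
  unfold gg
  simp

lemma line_neg_at_Q (Q m : ℕ) (hQ2 : 2 ≤ Q) (hm : m + 2 ≤ Q) :
    gg Q m + (gg Q (m+1) - gg Q m) * ((Q:ℝ) - (m:ℝ)) < 0 := by
  have hid := gg_line_id Q m Q hQ2
  rw [gg_at_Q] at hid
  have hQ0 : (0:ℝ) < (Q:ℝ) := by exact_mod_cast (by omega : 0 < Q)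
  have hmQ : (m:ℝ) + 2 ≤ (Q:ℝ) := by exact_mod_cast hm
  have hfac : 0 < ((Q:ℝ)-(m:ℝ)) * ((Q:ℝ)-(m:ℝ)-1) := by nlinarith
  have hc : 0 < (((Q:ℝ)+1) / ((Q:ℝ)*((m:ℝ)+1)*((m:ℝ)+2))) := by
    apply div_pos (by linarith)
    have h1 : (0:ℝ) < ((m:ℝ)+1) := by positivity
    have h2 : (0:ℝ) < ((m:ℝ)+2) := by positivity
    positivity
  have ht1 : (0:ℝ) < ((Q:ℝ)+1) := by linarith
  have := mul_pos hc (div_pos hfac ht1)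
  linarith

lemma gg_slope_neg (Q m : ℕ) (hQ2 : 2 ≤ Q) : gg Q (m+1) - gg Q m ≤ 0 := by
  have hQ0 : (0:ℝ) < (Q:ℝ) := by exact_mod_cast (by omega : 0 < Q)
  have hdiff : gg Q m - gg Q (m+1) = ((Q:ℝ)+1)/((Q:ℝ)*((m:ℝ)+1)*((m:ℝ)+2)) := by
    unfold gg
    have h1 : ((m:ℝ)+1) ≠ 0 := by positivity
    have h2 : ((m:ℝ)+2) ≠ 0 := by positivity
    push_cast
    field_simp
    ring
  have hc : 0 ≤ (((Q:ℝ)+1) / ((Q:ℝ)*((m:ℝ)+1)*((m:ℝ)+2))) := by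
    apply div_nonneg (by linarith)
    have h1 : (0:ℝ) < ((m:ℝ)+1) := by positivity
    have h2 : (0:ℝ) < ((m:ℝ)+2) := by positivity
    positivity
  linarith

section SchemeLemmas

variable {K N Q T : ℕ} (S : Scheme K N Q T)

lemma exists_mapper (hT : 0 < T) (k : Fin K) (q : Fin Q) (hq : q ∈ S.W k) (n : Fin N)
    (hn : n ∉ S.M k) : ∃ j : Fin K, n ∈ S.M j ∧ 0 < S.len j := by
  by_contra hcon
  push_neg at hcon
  classical
  set v0 : Fin Q × Fin N → Fin T → Bool := fun _ _ => false with hv0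
  set v1 : Fin Q × Fin N → Fin T → Bool := fun p _ => decide (p = (q, n)) with hv1
  have hmsg : (fun j => S.enc j (fun q' n' => v0 (q', n'.1))) =
      (fun j => S.enc j (fun q' n' => v1 (q', n'.1))) := by
    funext j
    by_cases hj : n ∈ S.M j
    · have h0 : S.len j = 0 := Nat.le_zero.mp (hcon j hj)
      funext x
      exact absurd x.isLt (by omega)
    · have harg : (fun (q' : Fin Q) (n' : {x : Fin N // x ∈ S.M j}) => v0 (q', n'.1)) =
          (fun q' n' => v1 (q', n'.1)) := by
        funext q' n'
        have hne : ((q', n'.1) : Fin Q × Fin N) ≠ (q, n) := by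
          intro h
          rw [Prod.ext_iff] at h
          apply hj
          have h2 : n'.1 = n := h.2
          rw [← h2]
          exact n'.2
        simp [hv0, hv1, hne]
      rw [harg]
  have hside : (fun (q' : Fin Q) (n' : {x // x ∈ S.M k}) => v0 (q', n'.1)) =
      (fun q' n' => v1 (q', n'.1)) := by
    funext q' n'
    have hne : ((q', n'.1) : Fin Q × Fin N) ≠ (q, n) := by
      intro h
      rw [Prod.ext_iff] at h
      apply hn
      have h2 : n'.1 = n := h.2
      rw [← h2]
      exact n'.2
    simp [hv0, hv1, hne]
  have h0 := S.correct v0 k q hq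
  have h1 := S.correct v1 k q hq
  rw [hmsg, hside] at h0
  rw [h0] at h1
  have := congrFun (congrFun h1 n) ⟨0, hT⟩
  simp [hv0, hv1] at this

variable (c : Fin Q → Fin K)

/-- `Pred σ n q` : no reducer among positions `≤ position of q` maps file `n`. -/
def Pred (σ : Equiv.Perm (Fin Q)) (n : Fin N) (q : Fin Q) : Prop :=
  ∀ j : Fin Q, j ≤ σ.symm q → n ∉ S.M (c (σ j))

instance (σ : Equiv.Perm (Fin Q)) (n : Fin N) : DecidablePred (Pred S c σ n) :=
  fun _ => Fintype.decidableForallFintype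

def cnt (σ : Equiv.Perm (Fin Q)) (n : Fin N) : ℕ :=
  (univ.filter (Pred S c σ n)).card

def vvD (σ : Equiv.Perm (Fin Q))
    (w : (n : Fin N) → {q : Fin Q // Pred S c σ n q} → (Fin T → Bool)) :
    Fin Q × Fin N → Fin T → Bool :=
  fun p => if h : Pred S c σ p.2 p.1 then w p.2 ⟨p.1, h⟩ else fun _ => false

lemma sigma_bound (hQ : 0 < Q) (hc : ∀ q : Fin Q, q ∈ S.W (c q)) (σ : Equiv.Perm (Fin Q)) :
    T * (∑ n : Fin N, cnt S c σ n) + S.len (c (σ ⟨0, hQ⟩)) ≤ ∑ j : Fin K, S.len j := by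
  classical
  set k0 := c (σ ⟨0, hQ⟩) with hk0
  set Φ : ((n : Fin N) → {q : Fin Q // Pred S c σ n q} → (Fin T → Bool)) →
      ((j : {j : Fin K // j ≠ k0}) → (Fin (S.len j.1) → Bool)) :=
    fun w j => S.enc j.1 (fun q' n' => vvD S c σ w (q', n'.1)) with hΦdef
  have hΦ : Function.Injective Φ := by
    intro w w' hww
    have hmsg : ∀ j : Fin K, S.enc j (fun q' n' => vvD S c σ w (q', n'.1)) =
        S.enc j (fun q' n' => vvD S c σ w' (q', n'.1)) := by
      intro j
      by_cases hj : j = k0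
      · subst hj
        have harg : (fun (q' : Fin Q) (n' : {x : Fin N // x ∈ S.M k0}) => vvD S c σ w (q', n'.1)) =
            (fun q' n' => vvD S c σ w' (q', n'.1)) := by
          funext q' n'
          have hnp : ¬ Pred S c σ n'.1 q' := by
            intro hp
            exact hp ⟨0, hQ⟩ (Fin.le_def.mpr (Nat.zero_le _)) n'.2
          simp [vvD, hnp]
        rw [harg]
      · exact congrFun hww ⟨j, hj⟩
    have hmsg' : (fun j => S.enc j (fun q' n' => vvD S c σ w (q', n'.1))) =
        (fun j => S.enc j (fun q' n' => vvD S c σ w' (q', n'.1))) := funext hmsg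
    have step : ∀ i : Fin Q,
        (∀ i' : Fin Q, i' < i → ∀ n : Fin N, vvD S c σ w (σ i', n) = vvD S c σ w' (σ i', n)) →
        ∀ n : Fin N, vvD S c σ w (σ i, n) = vvD S c σ w' (σ i, n) := by
      intro i ih n
      have hside : (fun (q' : Fin Q) (n' : {x // x ∈ S.M (c (σ i))}) => vvD S c σ w (q', n'.1)) =
          (fun q' n' => vvD S c σ w' (q', n'.1)) := by
        funext q' n'
        by_cases hp : Pred S c σ n'.1 q'
        · have hlt : σ.symm q' < i := by
            by_contra hge
            push_neg at hge
            exact hp i hge n'.2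
          have h := ih (σ.symm q') hlt n'.1
          rwa [Equiv.apply_symm_apply] at h
        · simp [vvD, hp]
      have h1 := S.correct (vvD S c σ w) (c (σ i)) (σ i) (hc (σ i))
      have h2 := S.correct (vvD S c σ w') (c (σ i)) (σ i) (hc (σ i))
      rw [hmsg', hside] at h1
      rw [h1] at h2
      exact congrFun h2 n
    have hrow : ∀ m : ℕ, ∀ i : Fin Q, i.1 ≤ m → ∀ n : Fin N,
        vvD S c σ w (σ i, n) = vvD S c σ w' (σ i, n) := by
      intro m
      induction m with
      | zero =>
        intro i hi n
        refine step i (fun i' hlt n' => absurd (Nat.lt_of_lt_of_le hlt hi) (Nat.not_lt_zero _)) n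
      | succ m ihm =>
        intro i hi n
        refine step i (fun i' hlt n' => ihm i' ?_ n') n
        have : i'.1 < i.1 := hlt
        omega
    funext n q'
    have h := hrow (σ.symm q'.1).1 (σ.symm q'.1) le_rfl n
    rw [Equiv.apply_symm_apply] at h
    simp only [vvD, dif_pos q'.2] at h
    simpa using h
  have hcard := Fintype.card_le_of_injective Φ hΦ
  have hD : Fintype.card ((n : Fin N) → {q : Fin Q // Pred S c σ n q} → (Fin T → Bool)) =
      (2 ^ T) ^ (∑ n : Fin N, cnt S c σ n) := by
    rw [Fintype.card_pi]
    have h1 : ∀ n : Fin N, Fintype.card ({q : Fin Q // Pred S c σ n q} → (Fin T → Bool)) =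
        (2 ^ T) ^ (cnt S c σ n) := by
      intro n
      rw [Fintype.card_fun]
      congr 1
      · rw [Fintype.card_fun]
        simp
      · rw [Fintype.card_subtype]
        rfl
    rw [Finset.prod_congr rfl (fun n _ => h1 n), Finset.prod_pow_eq_pow_sum]
  have hE : Fintype.card ((j : {j : Fin K // j ≠ k0}) → (Fin (S.len j.1) → Bool)) =
      2 ^ (∑ j ∈ univ.erase k0, S.len j) := by
    rw [Fintype.card_pi]
    have h1 : ∀ j : {j : Fin K // j ≠ k0},
        Fintype.card (Fin (S.len j.1) → Bool) = 2 ^ (S.len j.1) := by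
      intro j
      rw [Fintype.card_fun]
      simp
    rw [Finset.prod_congr rfl (fun j _ => h1 j)]
    rw [← Finset.prod_subtype (univ.erase k0) (fun x => by simp) (fun j => 2 ^ S.len j)]
    rw [Finset.prod_pow_eq_pow_sum]
  rw [hD, hE, ← pow_mul] at hcard
  have hexp : T * (∑ n : Fin N, cnt S c σ n) ≤ ∑ j ∈ univ.erase k0, S.len j :=
    (Nat.pow_le_pow_iff_right (by norm_num)).mp hcard
  have hsum := Finset.sum_erase_add univ S.len (mem_univ k0)
  omega

def BSet (n : Fin N) : Finset (Fin Q) := univ.filter (fun q => n ∈ S.M (c q))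

lemma cnt_eq_filter (σ : Equiv.Perm (Fin Q)) (n : Fin N) :
    cnt S c σ n =
    (univ.filter (fun q : Fin Q => ∀ j : Fin Q, j ≤ σ.symm q → σ j ∉ BSet S c n)).card := by
  unfold cnt
  congr 1
  ext q
  simp [Pred, BSet]

end SchemeLemmas


set_option maxHeartbeats 1000000 in
/-- minimum number of servers for the parallel implementation.
If `r*` is the unique `x ∈ [0,Q]` with `c_m·x/Q = c_s·ĝ(x)` (the unique
minimizer of `max{c_m·x/Q, c_s·ĝ(x)}`), `0 < r* ≤ Q−1`, then every scheme with
singleton Reduce assignment attaining `max{c_m·p, c_s·L} = c_m·r*/Q` uses at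
least `Q + ⌈Q/r*⌉` servers. -/
theorem min_servers_parallel (Q : ℕ) (hQ : 0 < Q) (cm cs : ℝ) (hcm : 0 < cm)
    (hcs : 0 < cs) (rstar : ℝ) (hmem : rstar ∈ Set.Icc (0 : ℝ) (Q : ℝ))
    (heq : cm * rstar / Q = cs * gHat Q rstar)
    (huniq : ∀ x ∈ Set.Icc (0 : ℝ) (Q : ℝ), cm * x / Q = cs * gHat Q x → x = rstar)
    (h0 : 0 < rstar) (h1 : rstar ≤ (Q : ℝ) - 1)
    (K N T : ℕ) (hK : 0 < K) (hN : 0 < N) (hT : 0 < T)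
    (S : Scheme K N Q T) (hS : SingletonReduce S)
    (hach : max (cm * peakLoad S) (cs * commLoad S) = cm * rstar / Q) :
    (Q : ℤ) + ⌈(Q : ℝ) / rstar⌉ ≤ (K : ℤ) := by
  classical
  have hQ2 : 2 ≤ Q := by
    by_contra hcon
    have hQ1 : Q = 1 := by omega
    rw [hQ1] at h1
    norm_num at h1
    linarith
  have hQR : (0:ℝ) < (Q:ℝ) := by exact_mod_cast hQ
  have hQ0 : (Q:ℝ) ≠ 0 := ne_of_gt hQR
  have hNR : (0:ℝ) < (N:ℝ) := by exact_mod_cast hN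
  have hTR : (0:ℝ) < (T:ℝ) := by exact_mod_cast hT
  obtain ⟨hdisj, hcoverW, hcard1⟩ := hS
  choose c hc using hcoverW
  have hcinj : Function.Injective c := by
    intro q q' h
    have h1' := hc q
    rw [h] at h1'
    exact Finset.card_le_one.mp (hcard1 (c q')) q h1' q' (hc q')
  -- load bounds
  have hpmax : cm * peakLoad S ≤ cm * rstar / Q :=
    le_of_le_of_eq (le_max_left _ _) hach
  have hLmax : cs * commLoad S ≤ cm * rstar / Q :=
    le_of_le_of_eq (le_max_right _ _) hach
  have hp : peakLoad S ≤ rstar / Q := by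
    rw [mul_div_assoc] at hpmax
    exact le_of_mul_le_mul_left hpmax hcm
  have hsup : ((Finset.univ.sup (fun k : Fin K => (S.M k).card) : ℕ) : ℝ) ≤ N * rstar / Q := by
    unfold peakLoad at hp
    rw [div_le_div_iff₀ hNR hQR] at hp
    rw [le_div_iff₀ hQR]
    linarith
  have hMle : ∀ k : Fin K, ((S.M k).card : ℝ) ≤ N * rstar / Q := by
    intro k
    refine le_trans ?_ hsup
    have h1 : (S.M k).card ≤ Finset.univ.sup (fun k : Fin K => (S.M k).card) :=
      Finset.le_sup (f := fun k : Fin K => (S.M k).card) (mem_univ k)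
    exact_mod_cast h1
  have hL : commLoad S ≤ gHat Q rstar := by
    rw [heq] at hLmax
    exact le_of_mul_le_mul_left hLmax hcs
  have hs : (∑ j : Fin K, (S.len j : ℝ)) ≤ (Q:ℝ) * N * T * gHat Q rstar := by
    unfold commLoad at hL
    rw [div_le_iff₀ (by positivity)] at hL
    linarith
  -- the multiplicity function
  set t : Fin N → ℕ := fun n => (BSet S c n).card with ht
  have htle : ∀ n : Fin N, t n ≤ Q := by
    intro n
    calc t n ≤ (univ : Finset (Fin Q)).card := card_le_card (filter_subset _ _)
      _ = Q := by simp
  -- sum of multiplicities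
  have hTsum : ∑ n : Fin N, t n = ∑ q : Fin Q, (S.M (c q)).card := by
    have h1 : ∀ n : Fin N, t n = ∑ q : Fin Q, (if n ∈ S.M (c q) then 1 else 0) := by
      intro n
      rw [ht]
      unfold BSet
      exact Finset.card_filter _ _
    rw [Finset.sum_congr rfl (fun n _ => h1 n), Finset.sum_comm]
    refine Finset.sum_congr rfl (fun q _ => ?_)
    rw [← Finset.card_filter]
    congr 1
    ext n
    simp
  have hsumt : ∑ n : Fin N, ((t n : ℕ) : ℝ) ≤ rstar * N := by
    have h1 : ∑ n : Fin N, ((t n : ℕ) : ℝ) = ∑ q : Fin Q, (((S.M (c q)).card : ℕ) : ℝ) := by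
      exact_mod_cast congrArg (Nat.cast : ℕ → ℝ) hTsum
    rw [h1]
    calc ∑ q : Fin Q, (((S.M (c q)).card : ℕ) : ℝ) ≤ ∑ _q : Fin Q, ((N:ℝ) * rstar / Q) :=
          Finset.sum_le_sum (fun q _ => hMle (c q))
      _ = (Q:ℝ) * ((N:ℝ) * rstar / Q) := by rw [Finset.sum_const]; simp [mul_comm]
      _ = rstar * N := by field_simp
  -- grand counting inequality (natural numbers)
  have hgrandN : T * (∑ n : Fin N, ∑ σ : Equiv.Perm (Fin Q), cnt S c σ n)
      + (Q-1).factorial * (∑ q : Fin Q, S.len (c q))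
      ≤ Q.factorial * (∑ j : Fin K, S.len j) := by
    have h2 := Finset.sum_le_sum
      (fun (σ : Equiv.Perm (Fin Q)) (_ : σ ∈ univ) => sigma_bound S c hQ hc σ)
    rw [Finset.sum_add_distrib, ← Finset.mul_sum, Finset.sum_comm,
      sum_first hQ (fun q => S.len (c q)), Finset.sum_const, card_univ,
      Fintype.card_perm, Fintype.card_fin, smul_eq_mul] at h2
    exact h2
  -- per-file exact count
  have hEn : ∀ n : Fin N, (t n + 1) * (∑ σ : Equiv.Perm (Fin Q), cnt S c σ n)
      = (Q - t n) * Q.factorial := by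
    intro n
    have h := perm_cnt_sum (BSet S c n)
    rw [Fintype.card_perm, Fintype.card_fin] at h
    rw [Finset.sum_congr rfl (fun σ _ => cnt_eq_filter S c σ n)]
    exact h
  have hEnR : ∀ n : Fin N, (∑ σ : Equiv.Perm (Fin Q), ((cnt S c σ n : ℕ) : ℝ))
      = (Q.factorial : ℝ) * ((Q:ℝ) * gg Q (t n)) := by
    intro n
    have h := congrArg (Nat.cast : ℕ → ℝ) (hEn n)
    push_cast [Nat.cast_sub (htle n)] at h
    have ht1 : ((t n : ℝ) + 1) ≠ 0 := by positivity
    have hgg2 : (Q.factorial : ℝ) * ((Q:ℝ) * gg Q (t n)) * ((t n : ℝ) + 1)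
        = ((Q:ℝ) - (t n : ℝ)) * (Q.factorial : ℝ) := by
      unfold gg
      field_simp
    apply mul_right_cancel₀ ht1
    rw [hgg2]
    linarith [h]
  clear hEn
  -- grand inequality over the reals
  have hfac1 : (0:ℝ) < ((Q-1).factorial : ℝ) := by exact_mod_cast (Q-1).factorial_pos
  have hfacQ : (0:ℝ) < (Q.factorial : ℝ) := by exact_mod_cast Q.factorial_pos
  have hgrandR : (T:ℝ) * ((Q.factorial : ℝ) * ((Q:ℝ) * ∑ n : Fin N, gg Q (t n)))
      + ((Q-1).factorial : ℝ) * (∑ q : Fin Q, (S.len (c q) : ℝ))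
      ≤ (Q.factorial : ℝ) * (∑ j : Fin K, (S.len j : ℝ)) := by
    have h2 : ((T * (∑ n : Fin N, ∑ σ : Equiv.Perm (Fin Q), cnt S c σ n)
        + (Q-1).factorial * (∑ q : Fin Q, S.len (c q)) : ℕ) : ℝ)
        ≤ ((Q.factorial * (∑ j : Fin K, S.len j) : ℕ) : ℝ) := by exact_mod_cast hgrandN
    push_cast at h2
    rw [Finset.sum_congr rfl (fun n _ => hEnR n), ← Finset.mul_sum, ← Finset.mul_sum] at h2
    exact h2
  -- the supporting line
  obtain ⟨m, hm1, hm2, hm3, hline⟩ := line_exists Q hQ2 rstar h0 h1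
  set sl : ℝ := gg Q (m+1) - gg Q m with hsl
  have hslope : sl ≤ 0 := gg_slope_neg Q m hQ2
  set δ : ℝ := -(gg Q m + sl * ((Q:ℝ) - (m:ℝ))) with hδ
  have hδpos : (0:ℝ) < δ := by
    have hneg := line_neg_at_Q Q m hQ2 hm3
    rw [hδ, hsl]
    linarith
  set Z : ℕ := (univ.filter (fun n : Fin N => t n = Q)).card with hZ
  -- per-file line bound
  have hper : ∀ n : Fin N,
      gg Q m + sl * ((t n : ℝ) - (m:ℝ)) + (if t n = Q then δ else 0) ≤ gg Q (t n) := by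
    intro n
    by_cases hn : t n = Q
    · rw [if_pos hn, hn, gg_at_Q, hδ]
      linarith
    · rw [if_neg hn, add_zero, hsl]
      exact gg_ge_line Q m (t n) hQ2
  have hjensen : (N:ℝ) * gHat Q rstar + δ * (Z:ℝ) ≤ ∑ n : Fin N, gg Q (t n) := by
    have hsummed := Finset.sum_le_sum (fun n (_ : n ∈ univ) => hper n)
    rw [Finset.sum_add_distrib, Finset.sum_add_distrib, Finset.sum_const, card_univ,
      Fintype.card_fin, nsmul_eq_mul, ← Finset.mul_sum, Finset.sum_sub_distrib,
      Finset.sum_const, card_univ, Fintype.card_fin, nsmul_eq_mul] at hsummed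
    have hite : ∑ n : Fin N, (if t n = Q then δ else 0) = (Z:ℝ) * δ := by
      rw [Finset.sum_ite, Finset.sum_const, Finset.sum_const, ← hZ]
      simp [mul_comm]
    rw [hite] at hsummed
    have hmul := mul_le_mul_of_nonpos_left hsumt hslope
    rw [hline]
    linarith [hsummed, hmul]
  -- extract Z = 0 and sR = 0
  have hZnonneg : (0:ℝ) ≤ (Z:ℝ) := by positivity
  have hsRnonneg : (0:ℝ) ≤ ∑ q : Fin Q, (S.len (c q) : ℝ) :=
    Finset.sum_nonneg (fun q _ => by positivity)
  have hfinal : (T:ℝ) * (Q.factorial : ℝ) * (Q:ℝ) * δ * (Z:ℝ)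
      + ((Q-1).factorial : ℝ) * (∑ q : Fin Q, (S.len (c q) : ℝ)) ≤ 0 := by
    have hB' : (T:ℝ) * (Q.factorial : ℝ) * (Q:ℝ) * ((N:ℝ) * gHat Q rstar + δ * (Z:ℝ))
        ≤ (T:ℝ) * (Q.factorial : ℝ) * (Q:ℝ) * (∑ n : Fin N, gg Q (t n)) :=
      mul_le_mul_of_nonneg_left hjensen (by positivity)
    have hC' : (Q.factorial : ℝ) * (∑ j : Fin K, (S.len j : ℝ))
        ≤ (Q.factorial : ℝ) * ((Q:ℝ) * N * T * gHat Q rstar) :=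
      mul_le_mul_of_nonneg_left hs (le_of_lt hfacQ)
    linarith [hgrandR, hB', hC']
  have hZ0 : Z = 0 := by
    by_contra hcon
    have hzpos : (0:ℝ) < (Z:ℝ) := by exact_mod_cast Nat.pos_of_ne_zero hcon
    nlinarith [hfinal, mul_pos (mul_pos (mul_pos (mul_pos hTR hfacQ) hQR) hδpos) hzpos,
      mul_nonneg (le_of_lt hfac1) hsRnonneg]
  have hsR0 : ∀ q : Fin Q, S.len (c q) = 0 := by
    have hle : (∑ q : Fin Q, (S.len (c q) : ℝ)) ≤ 0 := by
      rw [hZ0] at hfinal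
      push_cast at hfinal
      nlinarith [hfinal, hfac1]
    have hzero : (∑ q : Fin Q, (S.len (c q) : ℝ)) = 0 := le_antisymm hle hsRnonneg
    intro q
    have hall := Finset.sum_eq_zero_iff_of_nonneg
      (fun q (_ : q ∈ (univ : Finset (Fin Q))) =>
        (by positivity : (0:ℝ) ≤ (S.len (c q) : ℝ)))
    have h2 := (hall.mp hzero) q (mem_univ q)
    exact_mod_cast h2
  -- every file is mapped by some non-reducer
  have hcover' : ∀ n : Fin N, ∃ j : Fin K, n ∈ S.M j ∧ 0 < S.len j := by
    intro n
    have htn : t n ≠ Q := by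
      intro hcon
      have : n ∈ univ.filter (fun n : Fin N => t n = Q) := by
        simp [hcon]
      rw [Finset.card_eq_zero] at hZ0
      rw [hZ0] at this
      exact absurd this (Finset.notMem_empty n)
    obtain ⟨q, hq2⟩ : ∃ q : Fin Q, q ∉ BSet S c n := by
      by_contra hall
      push_neg at hall
      have hsub : (univ : Finset (Fin Q)) ⊆ BSet S c n := fun q _ => hall q
      have hcard := card_le_card hsub
      rw [card_univ, Fintype.card_fin] at hcard
      have h4 : t n = (BSet S c n).card := rfl
      have h5 := htle n
      omega
    have hq3 : n ∉ S.M (c q) := by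
      intro hmem
      exact hq2 (by simp [BSet, hmem])
    exact exists_mapper S hT (c q) q (hc q) n hq3
  set NR : Finset (Fin K) := univ \ (univ.image c) with hNRdef
  have hcov2 : ∀ n : Fin N, ∃ j ∈ NR, n ∈ S.M j := by
    intro n
    obtain ⟨j, hj1, hj2⟩ := hcover' n
    refine ⟨j, ?_, hj1⟩
    rw [hNRdef, Finset.mem_sdiff]
    refine ⟨mem_univ j, ?_⟩
    intro him
    obtain ⟨q, _, hq⟩ := Finset.mem_image.mp him
    rw [← hq] at hj2
    rw [hsR0 q] at hj2
    exact absurd hj2 (lt_irrefl 0)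
  have hNcard : (N:ℝ) ≤ (NR.card : ℝ) * ((N:ℝ) * rstar / Q) := by
    have hsub : (univ : Finset (Fin N)) ⊆ NR.biUnion S.M := by
      intro n _
      obtain ⟨j, hj1, hj2⟩ := hcov2 n
      exact Finset.mem_biUnion.mpr ⟨j, hj1, hj2⟩
    have h1 : N ≤ ∑ j ∈ NR, (S.M j).card := by
      calc N = (univ : Finset (Fin N)).card := by simp
        _ ≤ (NR.biUnion S.M).card := card_le_card hsub
        _ ≤ ∑ j ∈ NR, (S.M j).card := card_biUnion_le
    calc (N:ℝ) ≤ ∑ j ∈ NR, (((S.M j).card : ℕ) : ℝ) := by exact_mod_cast h1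
      _ ≤ ∑ _j ∈ NR, ((N:ℝ) * rstar / Q) := Finset.sum_le_sum (fun j _ => hMle j)
      _ = (NR.card : ℝ) * ((N:ℝ) * rstar / Q) := by rw [Finset.sum_const, nsmul_eq_mul]
  have hQK : Q ≤ K := by
    have h1 : (univ.image c).card = Q := by
      rw [Finset.card_image_of_injective _ hcinj, card_univ, Fintype.card_fin]
    calc Q = (univ.image c).card := h1.symm
      _ ≤ (univ : Finset (Fin K)).card := card_le_card (subset_univ _)
      _ = K := by simp
  have hNRcard : NR.card = K - Q := by
    rw [hNRdef, card_sdiff_of_subset (subset_univ _), card_univ, Fintype.card_fin,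
      Finset.card_image_of_injective _ hcinj, card_univ, Fintype.card_fin]
  have hratio : (Q:ℝ) / rstar ≤ ((K - Q : ℕ) : ℝ) := by
    rw [div_le_iff₀ h0]
    rw [hNRcard] at hNcard
    have h2 := mul_le_mul_of_nonneg_right hNcard (le_of_lt hQR)
    have h3 : ((K - Q : ℕ) : ℝ) * ((N:ℝ) * rstar / Q) * Q = ((K - Q : ℕ) : ℝ) * ((N:ℝ) * rstar) := by
      field_simp
    rw [h3] at h2
    nlinarith [h2, hNR]
  have hceil : ⌈(Q:ℝ) / rstar⌉ ≤ ((K - Q : ℕ) : ℤ) := by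
    apply Int.ceil_le.mpr
    exact_mod_cast hratio
  have hcast : ((K - Q : ℕ) : ℤ) = (K:ℤ) - (Q:ℤ) := by
    push_cast [Nat.cast_sub hQK]
    ring
  rw [hcast] at hceil
  linarith
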